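/- arXiv:0804.1440 — 2 statements merged into one kernel-verified Lean document; each statement's English description precedes it below -/
import Mathlib

section
/- For the Element Distinctness setting, let X be the set of bijections x : [N] → [N] and Y the set of non-injective functions y : [N] → [N], and let R ⊆ X × Y relate x and y iff there is exactly one i with x(i) ≠ y(i). Then: (a) every x ∈ X is related to exactly N(N−1) elements of Y; (b) for every x ∈ X and every i ∈ [N] there are exactly N−1 elements y ∈ Y with (x,y) ∈ R and x(i) ≠ y(i); (c) every y ∈ Y is related to at most 2 elements of X; (d) for every y ∈ Y and every i, there is at most 1 element x ∈ X with (x,y) ∈ R and x(i) ≠ y(i). -/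
open Finset

section Helpers

variable {N : ℕ}

lemma ed_sing (x y : Fin N → Fin N) (i : Fin N)
    (h : (Finset.univ.filter (fun j => x j ≠ y j)).card = 1) (hi : x i ≠ y i) :
    (Finset.univ.filter (fun j => x j ≠ y j)) = {i} := by
  obtain ⟨a, ha⟩ := Finset.card_eq_one.mp h
  have hm : i ∈ Finset.univ.filter (fun j => x j ≠ y j) := by simp [hi]
  rw [ha] at hm ⊢
  simp at hm
  subst hm; rfl

lemma ed_off (x y : Fin N → Fin N) (i : Fin N)
    (h : (Finset.univ.filter (fun j => x j ≠ y j)) = {i}) :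
    ∀ j ≠ i, x j = y j := by
  intro j hj
  by_contra hc
  have : j ∈ Finset.univ.filter (fun j => x j ≠ y j) := by simp [hc]
  rw [h] at this
  simp at this
  exact hj this

lemma ed_d (y : Fin N → Fin N) (i : Fin N) :
    ((Finset.univ.filter fun x : Fin N → Fin N => Function.Bijective x).filter (fun x =>
      (Finset.univ.filter (fun j => x j ≠ y j)).card = 1 ∧ x i ≠ y i)).card ≤ 1 := by
  rw [Finset.card_le_one]
  intro x hx x' hx'
  simp only [Finset.mem_filter, Finset.mem_univ, true_and] at hx hx'
  obtain ⟨hxb, hx1, hxi⟩ := hx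
  obtain ⟨hx'b, hx'1, hx'i⟩ := hx'
  have hoff := ed_off x y i (ed_sing x y i hx1 hxi)
  have hoff' := ed_off x' y i (ed_sing x' y i hx'1 hx'i)
  funext j
  by_cases hj : j = i
  · subst hj
    obtain ⟨k, hk⟩ := hxb.surjective (x' j)
    by_cases hk' : k = j
    · rw [← hk, hk']
    · exfalso
      have h1 : x' j = x' k := by rw [← hk, hoff k hk', ← hoff' k hk']
      exact hk' ((hx'b.injective h1).symm)
  · rw [hoff j hj, hoff' j hj]

lemma ed_b (x : Fin N → Fin N) (hx : Function.Bijective x) (i : Fin N) :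
    ((Finset.univ.filter fun y : Fin N → Fin N => ¬ Function.Injective y).filter (fun y =>
      (Finset.univ.filter (fun j => x j ≠ y j)).card = 1 ∧ x i ≠ y i)).card = N - 1 := by
  have hcard : ((Finset.univ.filter fun y : Fin N → Fin N => ¬ Function.Injective y).filter
      (fun y => (Finset.univ.filter (fun j => x j ≠ y j)).card = 1 ∧ x i ≠ y i)).card
      = (Finset.univ.filter (fun v : Fin N => v ≠ x i)).card := by
    apply Finset.card_bij' (fun y _ => y i) (fun v _ => Function.update x i v)
    · intro y hy
      simp only [Finset.mem_filter, Finset.mem_univ, true_and] at hy ⊢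
      exact fun h => hy.2.2 h.symm
    · intro v hv
      simp only [Finset.mem_filter, Finset.mem_univ, true_and] at hv ⊢
      obtain ⟨k, hk⟩ := hx.surjective v
      have hki : k ≠ i := by
        intro h; subst h; exact hv hk.symm
      have hdiff : (Finset.univ.filter (fun j => x j ≠ Function.update x i v j)) = {i} := by
        ext j
        simp only [Finset.mem_filter, Finset.mem_univ, true_and, Finset.mem_singleton]
        constructor
        · intro h
          by_contra hji
          rw [Function.update_of_ne hji] at h
          exact h rfl
        · intro h; subst h
          rw [Function.update_self]
          exact fun h => hv h.symm
      refine ⟨?_, ?_, ?_⟩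
      · intro hinj
        have : i = k := hinj (by rw [Function.update_self, Function.update_of_ne hki, hk])
        exact hki this.symm
      · rw [hdiff]; simp
      · rw [Function.update_self]; exact fun h => hv h.symm
    · intro y hy
      simp only [Finset.mem_filter, Finset.mem_univ, true_and] at hy
      have hoff := ed_off x y i (ed_sing x y i hy.2.1 hy.2.2)
      funext j
      by_cases hj : j = i
      · subst hj; rw [Function.update_self]
      · rw [Function.update_of_ne hj, hoff j hj]
    · intro v hv
      rw [Function.update_self]
  rw [hcard]
  rw [Finset.filter_ne']
  rw [Finset.card_erase_of_mem (Finset.mem_univ _)]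
  simp

lemma ed_a (x : Fin N → Fin N) (hx : Function.Bijective x) :
    ((Finset.univ.filter fun y : Fin N → Fin N => ¬ Function.Injective y).filter
      (fun y => (Finset.univ.filter (fun i => x i ≠ y i)).card = 1)).card = N * (N - 1) := by
  have hset : ((Finset.univ.filter fun y : Fin N → Fin N => ¬ Function.Injective y).filter
      (fun y => (Finset.univ.filter (fun i => x i ≠ y i)).card = 1))
      = Finset.univ.biUnion (fun i : Fin N =>
        (Finset.univ.filter fun y : Fin N → Fin N => ¬ Function.Injective y).filter
          (fun y => (Finset.univ.filter (fun j => x j ≠ y j)).card = 1 ∧ x i ≠ y i)) := by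
    ext y
    simp only [Finset.mem_biUnion, Finset.mem_filter, Finset.mem_univ, true_and]
    constructor
    · rintro ⟨h1, h2⟩
      obtain ⟨a, ha⟩ := Finset.card_eq_one.mp h2
      have : a ∈ Finset.univ.filter (fun i => x i ≠ y i) := by rw [ha]; simp
      simp only [Finset.mem_filter, Finset.mem_univ, true_and] at this
      exact ⟨a, h1, h2, this⟩
    · rintro ⟨a, h1, h2, h3⟩
      exact ⟨h1, h2⟩
  rw [hset, Finset.card_biUnion]
  · rw [Finset.sum_congr rfl (fun i _ => ed_b x hx i)]
    simp [mul_comm]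
  · intro i _ i' _ hii'
    rw [Function.onFun, Finset.disjoint_left]
    intro y hy hy'
    simp only [Finset.mem_filter, Finset.mem_univ, true_and] at hy hy'
    have e1 := ed_sing x y i hy.2.1 hy.2.2
    have e2 := ed_sing x y i' hy'.2.1 hy'.2.2
    rw [e1] at e2
    exact hii' (Finset.singleton_injective e2)

end Helpers

/-- Element Distinctness relation counts. `X` = bijections `[N] → [N]`,
`Y` = non-injective functions, `R` relates `x` and `y` iff they differ at exactly one
index. Then: (a) each `x ∈ X` is related to exactly `N(N-1)` elements of `Y`;
(b) for each `x ∈ X` and index `i` there are exactly `N-1` related `y` differing at `i`;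
(c) each `y ∈ Y` is related to at most `2` elements of `X`;
(d) for each `y ∈ Y` and index `i` there is at most `1` related `x` differing at `i`. -/
theorem stmt5 (N : ℕ) (hN : 2 ≤ N)
    (X Y : Finset (Fin N → Fin N))
    (hX : X = Finset.univ.filter (fun x => Function.Bijective x))
    (hY : Y = Finset.univ.filter (fun y => ¬ Function.Injective y)) :
    (∀ x ∈ X,
      (Y.filter (fun y => (Finset.univ.filter (fun i => x i ≠ y i)).card = 1)).card
        = N * (N - 1)) ∧
    (∀ x ∈ X, ∀ i : Fin N,
      (Y.filter (fun y =>
        (Finset.univ.filter (fun j => x j ≠ y j)).card = 1 ∧ x i ≠ y i)).card = N - 1) ∧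
    (∀ y ∈ Y,
      (X.filter (fun x => (Finset.univ.filter (fun i => x i ≠ y i)).card = 1)).card ≤ 2) ∧
    (∀ y ∈ Y, ∀ i : Fin N,
      (X.filter (fun x =>
        (Finset.univ.filter (fun j => x j ≠ y j)).card = 1 ∧ x i ≠ y i)).card ≤ 1) := by
  subst hX hY
  refine ⟨?_, ?_, ?_, ?_⟩
  · intro x hx
    simp only [Finset.mem_filter, Finset.mem_univ, true_and] at hx
    exact ed_a x hx
  · intro x hx i
    simp only [Finset.mem_filter, Finset.mem_univ, true_and] at hx
    exact ed_b x hx i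
  · intro y hy
    simp only [Finset.mem_filter, Finset.mem_univ, true_and] at hy
    rw [Function.not_injective_iff] at hy
    obtain ⟨a, b, hab, hne⟩ := hy
    have hsub : ((Finset.univ.filter fun x : Fin N → Fin N => Function.Bijective x).filter
        (fun x => (Finset.univ.filter (fun i => x i ≠ y i)).card = 1))
        ⊆ ((Finset.univ.filter fun x : Fin N → Fin N => Function.Bijective x).filter
            (fun x => (Finset.univ.filter (fun j => x j ≠ y j)).card = 1 ∧ x a ≠ y a))
          ∪ ((Finset.univ.filter fun x : Fin N → Fin N => Function.Bijective x).filter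
            (fun x => (Finset.univ.filter (fun j => x j ≠ y j)).card = 1 ∧ x b ≠ y b)) := by
      intro x hx
      simp only [Finset.mem_filter, Finset.mem_univ, true_and, Finset.mem_union] at hx ⊢
      obtain ⟨hxb, h1⟩ := hx
      by_cases hA : x a ≠ y a
      · exact Or.inl ⟨hxb, h1, hA⟩
      by_cases hB : x b ≠ y b
      · exact Or.inr ⟨hxb, h1, hB⟩
      exfalso
      push_neg at hA hB
      have : x a = x b := by rw [hA, hB, hab]
      exact hne (hxb.injective this)
    have hc1 := Finset.card_le_card hsub
    have hc2 := Finset.card_union_le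
      ((Finset.univ.filter fun x : Fin N → Fin N => Function.Bijective x).filter
        (fun x => (Finset.univ.filter (fun j => x j ≠ y j)).card = 1 ∧ x a ≠ y a))
      ((Finset.univ.filter fun x : Fin N → Fin N => Function.Bijective x).filter
        (fun x => (Finset.univ.filter (fun j => x j ≠ y j)).card = 1 ∧ x b ≠ y b))
    have h1 := ed_d y a
    have h2 := ed_d y b
    exact hc1.trans (hc2.trans (le_trans (Nat.add_le_add h1 h2) (by norm_num)))
  · intro y hy i
    exact ed_d y i
end

section
/- Let F : S → S' and let w_Q be a valid weight function and s_Q ∈ S'. Define w_P(x,y) = w_Q(x,y) if F(x) = s_Q or F(y) = s_Q, and w_P(x,y) = 0 otherwise. Then w_P is a valid weight function, and for every pair (x,y) with w_P(x,y) > 0 and every i with x(i) ≠ y(i), max( wt_P(x)/v_P(x,i), wt_P(y)/v_P(y,i) ) ≥ min over pairs (z,i) with F(z) = s_Q of wt_Q(z)/v_Q(z,i). Consequently L_P(F) ≥ L_Q^{na}(F), i.e., max over valid w and pairs of the probabilistic adversary quantity is at least max_w max_{s ∈ S'} min_{x,i : F(x)=s} wt(x)/v(x,i). -/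
set_option linter.unusedSectionVars false
set_option maxHeartbeats 1000000
open Finset

section helper

variable {Γ Sig S' : Type*} [Fintype Γ] [DecidableEq Γ] [Fintype Sig] [DecidableEq Sig]
  [DecidableEq S'] [Nonempty Γ]

lemma qset_lb (F : (Γ → Sig) → S') (w : (Γ → Sig) → (Γ → Sig) → ℝ)
    (hnn : ∀ x y, 0 ≤ w x y) (s : S') :
    ∀ q ∈ {q : ℝ | ∃ z j, F z = s ∧
      q = (∑ u, w z u) / (∑ u ∈ univ.filter (fun u => z j ≠ u j), w z u)}, (0:ℝ) ≤ q := by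
  rintro q ⟨z, j, -, rfl⟩
  exact div_nonneg (Finset.sum_nonneg fun u _ => hnn z u)
    (Finset.sum_nonneg fun u _ => hnn z u)

lemma trunc_valid (F : (Γ → Sig) → S') (w w' : (Γ → Sig) → (Γ → Sig) → ℝ)
    (hnn : ∀ x y, 0 ≤ w x y) (hsym : ∀ x y, w x y = w y x)
    (hvan : ∀ x y, F x = F y → w x y = 0) (s : S')
    (hw' : ∀ x y, w' x y = if F x = s ∨ F y = s then w x y else 0) :
    (∀ x y, 0 ≤ w' x y) ∧ (∀ x y, w' x y = w' y x) ∧ (∀ x y, F x = F y → w' x y = 0) := by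
  refine ⟨fun x y => ?_, fun x y => ?_, fun x y hf => ?_⟩
  · rw [hw']; split
    · exact hnn x y
    · exact le_refl 0
  · rw [hw', hw']
    by_cases h : F x = s ∨ F y = s
    · rw [if_pos h, if_pos h.symm, hsym]
    · rw [if_neg h, if_neg fun hh => h hh.symm]
  · rw [hw']; split
    · exact hvan x y hf
    · rfl

lemma trunc_bound (F : (Γ → Sig) → S') (w w' : (Γ → Sig) → (Γ → Sig) → ℝ)
    (hnn : ∀ x y, 0 ≤ w x y) (s : S')
    (hw' : ∀ x y, w' x y = if F x = s ∨ F y = s then w x y else 0) :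
    ∀ x y i, 0 < w' x y → x i ≠ y i →
      sInf {q : ℝ | ∃ z j, F z = s ∧
          q = (∑ u, w z u) / (∑ u ∈ univ.filter (fun u => z j ≠ u j), w z u)}
        ≤ max ((∑ u, w' x u) / (∑ u ∈ univ.filter (fun u => x i ≠ u i), w' x u))
              ((∑ u, w' y u) / (∑ u ∈ univ.filter (fun u => y i ≠ u i), w' y u)) := by
  intro x y i hpos hne
  have hbdd : BddBelow {q : ℝ | ∃ z j, F z = s ∧
      q = (∑ u, w z u) / (∑ u ∈ univ.filter (fun u => z j ≠ u j), w z u)} :=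
    ⟨0, fun q hq => qset_lb F w hnn s q hq⟩
  have hc : F x = s ∨ F y = s := by
    by_contra hcc
    rw [hw', if_neg hcc] at hpos
    exact lt_irrefl 0 hpos
  rcases hc with h | h
  · have h1 : ∀ u, w' x u = w x u := fun u => by rw [hw', if_pos (Or.inl h)]
    calc sInf _ ≤ (∑ u, w x u) / (∑ u ∈ univ.filter (fun u => x i ≠ u i), w x u) :=
          csInf_le hbdd ⟨x, i, h, rfl⟩
      _ = (∑ u, w' x u) / (∑ u ∈ univ.filter (fun u => x i ≠ u i), w' x u) := by
          rw [Finset.sum_congr rfl fun u _ => (h1 u).symm,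
            Finset.sum_congr rfl fun u _ => (h1 u).symm]
      _ ≤ _ := le_max_left _ _
  · have h1 : ∀ u, w' y u = w y u := fun u => by rw [hw', if_pos (Or.inl h)]
    calc sInf _ ≤ (∑ u, w y u) / (∑ u ∈ univ.filter (fun u => y i ≠ u i), w y u) :=
          csInf_le hbdd ⟨y, i, h, rfl⟩
      _ = (∑ u, w' y u) / (∑ u ∈ univ.filter (fun u => y i ≠ u i), w' y u) := by
          rw [Finset.sum_congr rfl fun u _ => (h1 u).symm,
            Finset.sum_congr rfl fun u _ => (h1 u).symm]
      _ ≤ _ := le_max_right _ _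


section counting

variable {Γ Sig S' : Type*} [Fintype Γ] [DecidableEq Γ] [Fintype Sig] [DecidableEq Sig]
  [DecidableEq S'] [Nonempty Γ]

lemma exists_balanced (F : (Γ → Sig) → S') (w : (Γ → Sig) → (Γ → Sig) → ℝ)
    (hnn : ∀ x y, 0 ≤ w x y) (hsym : ∀ x y, w x y = w y x)
    (hvan : ∀ x y, F x = F y → w x y = 0)
    {x0 y0 : Γ → Sig} (h0 : 0 < w x0 y0) :
    ∃ x y i, 0 < w x y ∧ x i ≠ y i ∧
      (∑ u, w x u) ≤ 2 * (Fintype.card Γ : ℝ) * (∑ u ∈ univ.filter (fun u => x i ≠ u i), w x u) ∧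
      (∑ u, w y u) ≤ 2 * (Fintype.card Γ : ℝ) * (∑ u ∈ univ.filter (fun u => y i ≠ u i), w y u) := by
  classical
  set n : ℝ := (Fintype.card Γ : ℝ) with hn
  have hnpos : 0 < n := by
    rw [hn]; exact_mod_cast Fintype.card_pos
  have c2 : (0:ℝ) < 2 * n := by linarith
  set wt : (Γ → Sig) → ℝ := fun x => ∑ u, w x u with hwt
  set v : (Γ → Sig) → Γ → ℝ := fun x i => ∑ u ∈ univ.filter (fun u => x i ≠ u i), w x u with hv
  have hwt_nn : ∀ x, 0 ≤ wt x := fun x => Finset.sum_nonneg fun u _ => hnn x u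
  by_contra hcon
  push_neg at hcon
  have H : ∀ x y i, 0 < w x y → x i ≠ y i → 2*n*(v x i) < wt x ∨ 2*n*(v y i) < wt y := by
    intro x y i h1 h2
    by_cases h3 : wt x ≤ 2*n*(v x i)
    · exact Or.inr (hcon x y i h1 h2 h3)
    · exact Or.inl (not_le.mp h3)
  set L : (Γ → Sig) → Finset Γ := fun x => univ.filter (fun i => 2*n*(v x i) < wt x) with hL
  have hneFx : ∀ x y, 0 < w x y → ∃ i, x i ≠ y i := by
    intro x y hxy
    have hF : F x ≠ F y := fun he => absurd (hvan x y he) (ne_of_gt hxy)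
    have hxyne : x ≠ y := fun he => hF (by rw [he])
    exact Function.ne_iff.mp hxyne
  -- upper bound
  have upper : ∑ x, ∑ i ∈ L x, v x i < ∑ x, wt x / 2 := by
    apply Finset.sum_lt_sum
    · intro x _
      calc ∑ i ∈ L x, v x i ≤ ∑ _i ∈ L x, wt x / (2*n) := by
            apply Finset.sum_le_sum
            intro i hi
            have hi' : 2*n*(v x i) < wt x := (Finset.mem_filter.mp hi).2
            exact le_of_lt ((lt_div_iff₀ c2).mpr (by rw [mul_comm]; exact hi'))
        _ = ((L x).card : ℝ) * (wt x / (2*n)) := by rw [Finset.sum_const, nsmul_eq_mul]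
        _ ≤ n * (wt x / (2*n)) := by
            apply mul_le_mul_of_nonneg_right _ (div_nonneg (hwt_nn x) (le_of_lt c2))
            rw [hn]
            exact_mod_cast Finset.card_le_univ (L x)
        _ = wt x / 2 := by field_simp
    · -- strict witness
      obtain ⟨i0, hi0⟩ := hneFx x0 y0 h0
      have hwtx0 : 0 < wt x0 :=
        lt_of_lt_of_le h0 (Finset.single_le_sum (fun u _ => hnn x0 u) (mem_univ y0))
      have hwty0 : 0 < wt y0 := by
        have : w x0 y0 = w y0 x0 := hsym x0 y0
        exact lt_of_lt_of_le (this ▸ h0)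
          (Finset.single_le_sum (fun u _ => hnn y0 u) (mem_univ x0))
      obtain ⟨xs, hwts, hLne⟩ : ∃ xs, 0 < wt xs ∧ (L xs).Nonempty := by
        rcases H x0 y0 i0 h0 hi0 with h | h
        · exact ⟨x0, hwtx0, ⟨i0, Finset.mem_filter.mpr ⟨mem_univ _, h⟩⟩⟩
        · exact ⟨y0, hwty0, ⟨i0, Finset.mem_filter.mpr ⟨mem_univ _, h⟩⟩⟩
      refine ⟨xs, mem_univ _, ?_⟩
      calc ∑ i ∈ L xs, v xs i < ∑ _i ∈ L xs, wt xs / (2*n) := by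
            apply Finset.sum_lt_sum_of_nonempty hLne
            intro i hi
            have hi' : 2*n*(v xs i) < wt xs := (Finset.mem_filter.mp hi).2
            exact (lt_div_iff₀ c2).mpr (by rw [mul_comm]; exact hi')
        _ = ((L xs).card : ℝ) * (wt xs / (2*n)) := by rw [Finset.sum_const, nsmul_eq_mul]
        _ ≤ n * (wt xs / (2*n)) := by
            apply mul_le_mul_of_nonneg_right _ (div_nonneg (hwt_nn xs) (le_of_lt c2))
            rw [hn]
            exact_mod_cast Finset.card_le_univ (L xs)
        _ = wt xs / 2 := by field_simp
  -- rewrite the double sum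
  set c : (Γ → Sig) → (Γ → Sig) → ℝ :=
    fun x u => (((L x).filter (fun i => x i ≠ u i)).card : ℝ) with hc
  have swap_eq : ∀ x, ∑ i ∈ L x, v x i = ∑ u, c x u * w x u := by
    intro x
    calc ∑ i ∈ L x, v x i = ∑ i ∈ L x, ∑ u, (if x i ≠ u i then w x u else 0) := by
          apply Finset.sum_congr rfl
          intro i _
          rw [hv]
          exact Finset.sum_filter _ _
      _ = ∑ u, ∑ i ∈ L x, (if x i ≠ u i then w x u else 0) := Finset.sum_comm
      _ = ∑ u, c x u * w x u := by
          apply Finset.sum_congr rfl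
          intro u _
          rw [← Finset.sum_filter, Finset.sum_const, nsmul_eq_mul]
  have key : ∀ x u, 0 < w x u → 1 ≤ c x u + c u x := by
    intro x u hw
    obtain ⟨i, hi⟩ := hneFx x u hw
    have hnn2 : (0:ℝ) ≤ c x u := by rw [hc]; positivity
    have hnn3 : (0:ℝ) ≤ c u x := by rw [hc]; positivity
    rcases H x u i hw hi with h | h
    · have hm : i ∈ (L x).filter (fun i => x i ≠ u i) :=
        Finset.mem_filter.mpr ⟨Finset.mem_filter.mpr ⟨mem_univ _, h⟩, hi⟩
      have h1 : 1 ≤ c x u := by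
        have hcard : 1 ≤ ((L x).filter (fun i => x i ≠ u i)).card := Finset.card_pos.mpr ⟨i, hm⟩
        simp only [hc]
        exact_mod_cast hcard
      linarith
    · have hm : i ∈ (L u).filter (fun i => u i ≠ x i) :=
        Finset.mem_filter.mpr ⟨Finset.mem_filter.mpr ⟨mem_univ _, h⟩, hi.symm⟩
      have h1 : 1 ≤ c u x := by
        have hcard : 1 ≤ ((L u).filter (fun i => u i ≠ x i)).card := Finset.card_pos.mpr ⟨i, hm⟩
        simp only [hc]
        exact_mod_cast hcard
      linarith
  have lower : ∑ x, wt x ≤ 2 * ∑ x, ∑ i ∈ L x, v x i := by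
    have e1 : ∑ x, ∑ i ∈ L x, v x i = ∑ x, ∑ u, c x u * w x u :=
      Finset.sum_congr rfl fun x _ => swap_eq x
    have e2 : ∑ x, ∑ u, c x u * w x u = ∑ x, ∑ u, c u x * w x u := by
      rw [Finset.sum_comm]
      apply Finset.sum_congr rfl
      intro a _
      apply Finset.sum_congr rfl
      intro b _
      rw [hsym b a]
    have e3 : ∀ x u, w x u ≤ (c x u + c u x) * w x u := by
      intro x u
      rcases eq_or_lt_of_le (hnn x u) with h | h
      · rw [← h]; simp
      · nlinarith [key x u h]
    calc ∑ x, wt x = ∑ x, ∑ u, w x u := rfl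
      _ ≤ ∑ x, ∑ u, (c x u + c u x) * w x u :=
          Finset.sum_le_sum fun x _ => Finset.sum_le_sum fun u _ => e3 x u
      _ = (∑ x, ∑ u, c x u * w x u) + ∑ x, ∑ u, c u x * w x u := by
          simp only [add_mul, Finset.sum_add_distrib]
      _ = 2 * ∑ x, ∑ i ∈ L x, v x i := by rw [← e2, ← e1]; ring
  have hsd : ∑ x, wt x / 2 = (∑ x, wt x) / 2 := by rw [Finset.sum_div]
  linarith

end counting
lemma LQ_le_LP (F : (Γ → Sig) → S') :
    sSup {r : ℝ | ∃ w : (Γ → Sig) → (Γ → Sig) → ℝ,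
      ((∀ x y, 0 ≤ w x y) ∧ (∀ x y, w x y = w y x) ∧ (∀ x y, F x = F y → w x y = 0)) ∧
      ∃ s : S', r = sInf {q : ℝ | ∃ x i, F x = s ∧
        q = (∑ u, w x u) / (∑ u ∈ univ.filter (fun u => x i ≠ u i), w x u)}}
    ≤ sSup {r : ℝ | ∃ w : (Γ → Sig) → (Γ → Sig) → ℝ,
      ((∀ x y, 0 ≤ w x y) ∧ (∀ x y, w x y = w y x) ∧ (∀ x y, F x = F y → w x y = 0)) ∧
      r = sInf {q : ℝ | ∃ x y i, 0 < w x y ∧ x i ≠ y i ∧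
        q = max ((∑ u, w x u) / (∑ u ∈ univ.filter (fun u => x i ≠ u i), w x u))
                ((∑ u, w y u) / (∑ u ∈ univ.filter (fun u => y i ≠ u i), w y u))}} := by
  classical
  set B := {r : ℝ | ∃ w : (Γ → Sig) → (Γ → Sig) → ℝ,
      ((∀ x y, 0 ≤ w x y) ∧ (∀ x y, w x y = w y x) ∧ (∀ x y, F x = F y → w x y = 0)) ∧
      r = sInf {q : ℝ | ∃ x y i, 0 < w x y ∧ x i ≠ y i ∧
        q = max ((∑ u, w x u) / (∑ u ∈ univ.filter (fun u => x i ≠ u i), w x u))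
                ((∑ u, w y u) / (∑ u ∈ univ.filter (fun u => y i ≠ u i), w y u))}} with hB
  -- B is bounded above by 2 * card Γ
  have hBdd : BddAbove B := by
    refine ⟨2 * (Fintype.card Γ : ℝ), ?_⟩
    rintro r ⟨w, ⟨hnn', hsym', hvan'⟩, rfl⟩
    by_cases hpos : ∃ x y, 0 < w x y
    · obtain ⟨x0, y0, h0⟩ := hpos
      obtain ⟨x, y, i, hxy, hne, hbx, hby⟩ := exists_balanced F w hnn' hsym' hvan' h0
      have hTlb : ∀ q ∈ {q : ℝ | ∃ x y i, 0 < w x y ∧ x i ≠ y i ∧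
          q = max ((∑ u, w x u) / (∑ u ∈ univ.filter (fun u => x i ≠ u i), w x u))
                  ((∑ u, w y u) / (∑ u ∈ univ.filter (fun u => y i ≠ u i), w y u))}, (0:ℝ) ≤ q := by
        rintro q ⟨x, y, i, -, -, rfl⟩
        exact le_trans (div_nonneg (Finset.sum_nonneg fun u _ => hnn' x u)
          (Finset.sum_nonneg fun u _ => hnn' x u)) (le_max_left _ _)
      refine le_trans (csInf_le ⟨0, hTlb⟩ ⟨x, y, i, hxy, hne, rfl⟩) ?_
      have hvx : 0 < (∑ u ∈ univ.filter (fun u => x i ≠ u i), w x u) := by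
        by_contra hv
        push_neg at hv
        have hwtx : 0 < ∑ u, w x u :=
          lt_of_lt_of_le hxy (Finset.single_le_sum (fun u _ => hnn' x u) (mem_univ y))
        nlinarith [Fintype.card_pos (α := Γ), hbx]
      have hvy : 0 < (∑ u ∈ univ.filter (fun u => y i ≠ u i), w y u) := by
        by_contra hv
        push_neg at hv
        have hwty : 0 < ∑ u, w y u := by
          have he : w x y = w y x := hsym' x y
          exact lt_of_lt_of_le (he ▸ hxy)
            (Finset.single_le_sum (fun u _ => hnn' y u) (mem_univ x))
        nlinarith [Fintype.card_pos (α := Γ), hby]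
      exact max_le ((div_le_iff₀ hvx).mpr (by linarith)) ((div_le_iff₀ hvy).mpr (by linarith))
    · push_neg at hpos
      have hT : {q : ℝ | ∃ x y i, 0 < w x y ∧ x i ≠ y i ∧
          q = max ((∑ u, w x u) / (∑ u ∈ univ.filter (fun u => x i ≠ u i), w x u))
                  ((∑ u, w y u) / (∑ u ∈ univ.filter (fun u => y i ≠ u i), w y u))} = ∅ :=
        Set.eq_empty_iff_forall_notMem.mpr fun q ⟨x, y, i, h, _, _⟩ =>
          absurd h (not_lt.mpr (hpos x y))
      rw [hT, Real.sInf_empty]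
      positivity
  have h0B : (0:ℝ) ∈ B := by
    refine ⟨fun _ _ => 0, ⟨fun _ _ => le_refl 0, fun _ _ => rfl, fun _ _ _ => rfl⟩, Eq.symm ?_⟩
    convert Real.sInf_empty using 2
    ext q
    simp
  apply Real.sSup_le
  · rintro a ⟨w, ⟨hnn', hsym', hvan'⟩, s, rfl⟩
    set w' : (Γ → Sig) → (Γ → Sig) → ℝ :=
      fun x y => if F x = s ∨ F y = s then w x y else 0 with hw'def
    have hw' : ∀ x y, w' x y = if F x = s ∨ F y = s then w x y else 0 := fun _ _ => rfl
    have hvalid' := trunc_valid F w w' hnn' hsym' hvan' s hw'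
    set T' := {q : ℝ | ∃ x y i, 0 < w' x y ∧ x i ≠ y i ∧
        q = max ((∑ u, w' x u) / (∑ u ∈ univ.filter (fun u => x i ≠ u i), w' x u))
                ((∑ u, w' y u) / (∑ u ∈ univ.filter (fun u => y i ≠ u i), w' y u))} with hT'
    have hbB : sInf T' ∈ B := ⟨w', hvalid', rfl⟩
    have hab : sInf {q : ℝ | ∃ x i, F x = s ∧
        q = (∑ u, w x u) / (∑ u ∈ univ.filter (fun u => x i ≠ u i), w x u)} ≤ sInf T' := by
      by_cases hTne : T'.Nonempty
      · refine le_csInf hTne ?_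
        rintro q ⟨x, y, i, hpos, hne, rfl⟩
        exact trunc_bound F w w' hnn' s hw' x y i hpos hne
      · have hz : ∀ x y, w' x y = 0 := by
          intro x y
          by_contra hne0
          have hp : 0 < w' x y := lt_of_le_of_ne (hvalid'.1 x y) (Ne.symm hne0)
          have hF : F x ≠ F y := fun he => hne0 (hvalid'.2.2 x y he)
          have hxyne : x ≠ y := fun he => hF (by rw [he])
          obtain ⟨i, hi⟩ := Function.ne_iff.mp hxyne
          exact hTne ⟨_, ⟨x, y, i, hp, hi, rfl⟩⟩
        rw [Set.not_nonempty_iff_eq_empty.mp hTne, Real.sInf_empty]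
        by_cases hs : ∃ z, F z = s
        · obtain ⟨z, hzs⟩ := hs
          have i0 : Γ := Classical.arbitrary Γ
          have hwz : ∀ u, w z u = 0 := by
            intro u
            have := hz z u
            rwa [hw', if_pos (Or.inl hzs)] at this
          have hval : (0:ℝ) = (∑ u, w z u) /
              (∑ u ∈ univ.filter (fun u => z i0 ≠ u i0), w z u) := by
            rw [Finset.sum_eq_zero fun u _ => hwz u, zero_div]
          exact csInf_le ⟨0, fun q hq => qset_lb F w hnn' s q hq⟩ ⟨z, i0, hzs, hval⟩
        · have hAe : {q : ℝ | ∃ x i, F x = s ∧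
              q = (∑ u, w x u) / (∑ u ∈ univ.filter (fun u => x i ≠ u i), w x u)} = ∅ :=
            Set.eq_empty_iff_forall_notMem.mpr fun q ⟨x, i, hxs, _⟩ => hs ⟨x, hxs⟩
          rw [hAe, Real.sInf_empty]
    exact le_trans hab (le_csSup hBdd hbB)
  · exact le_csSup hBdd h0B

end helper

/-- from a valid weight function `w_Q` and a value `s_Q`, the weight
function `w_P(x,y) = w_Q(x,y)` if `F x = s_Q ∨ F y = s_Q` (and `0` otherwise) is a valid
weight function; for every pair with `w_P x y > 0` and every `i` with `x i ≠ y i`, the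
quantity `max(wt_P x / v_P x i, wt_P y / v_P y i)` is at least
`min_{(z,j) : F z = s_Q} wt_Q z / v_Q z j`; consequently `L_P(F) ≥ L_Q^{na}(F)`. -/
theorem stmt6 {Γ Sig S' : Type*} [Fintype Γ] [DecidableEq Γ] [Fintype Sig] [DecidableEq Sig]
    [DecidableEq S'] [Nonempty Γ]
    (F : (Γ → Sig) → S')
    (wQ : (Γ → Sig) → (Γ → Sig) → ℝ)
    (hnn : ∀ x y, 0 ≤ wQ x y) (hsym : ∀ x y, wQ x y = wQ y x)
    (hvan : ∀ x y, F x = F y → wQ x y = 0)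
    (sQ : S') (hsQ : ∃ z, F z = sQ)
    (wP : (Γ → Sig) → (Γ → Sig) → ℝ)
    (hwP : ∀ x y, wP x y = if F x = sQ ∨ F y = sQ then wQ x y else 0)
    (LP LQ : ℝ)
    (hLP : LP = sSup {r : ℝ | ∃ w : (Γ → Sig) → (Γ → Sig) → ℝ,
      ((∀ x y, 0 ≤ w x y) ∧ (∀ x y, w x y = w y x) ∧ (∀ x y, F x = F y → w x y = 0)) ∧
      r = sInf {q : ℝ | ∃ x y i, 0 < w x y ∧ x i ≠ y i ∧
        q = max ((∑ u, w x u) / (∑ u ∈ Finset.univ.filter (fun u => x i ≠ u i), w x u))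
                ((∑ u, w y u) / (∑ u ∈ Finset.univ.filter (fun u => y i ≠ u i), w y u))}})
    (hLQ : LQ = sSup {r : ℝ | ∃ w : (Γ → Sig) → (Γ → Sig) → ℝ,
      ((∀ x y, 0 ≤ w x y) ∧ (∀ x y, w x y = w y x) ∧ (∀ x y, F x = F y → w x y = 0)) ∧
      ∃ s : S', r = sInf {q : ℝ | ∃ x i, F x = s ∧
        q = (∑ u, w x u) / (∑ u ∈ Finset.univ.filter (fun u => x i ≠ u i), w x u)}}) :
    ((∀ x y, 0 ≤ wP x y) ∧ (∀ x y, wP x y = wP y x) ∧ (∀ x y, F x = F y → wP x y = 0)) ∧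
    (∀ x y i, 0 < wP x y → x i ≠ y i →
      sInf {q : ℝ | ∃ z j, F z = sQ ∧
          q = (∑ u, wQ z u) / (∑ u ∈ Finset.univ.filter (fun u => z j ≠ u j), wQ z u)}
        ≤ max ((∑ u, wP x u) / (∑ u ∈ Finset.univ.filter (fun u => x i ≠ u i), wP x u))
              ((∑ u, wP y u) / (∑ u ∈ Finset.univ.filter (fun u => y i ≠ u i), wP y u))) ∧
    LQ ≤ LP := by
  refine ⟨trunc_valid F wQ wP hnn hsym hvan sQ hwP,
    trunc_bound F wQ wP hnn sQ hwP, ?_⟩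
  rw [hLQ, hLP]
  exact LQ_le_LP F
end
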